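/- Let G be a subgroup of the symmetric group S_n acting transitively on {1,...,n}, containing a transposition and a p-cycle for some prime p with p > n/2. Then G = S_n. -/

import Mathlib

open Equiv Finset

theorem transitive_swap_pcycle_eq_top (n : ℕ) (G : Subgroup (Equiv.Perm (Fin n)))
    (htrans : ∀ i j : Fin n, ∃ σ ∈ G, σ i = j)
    (hswap : ∃ σ ∈ G, σ.IsSwap)
    (p : ℕ) (hp : p.Prime) (hp2 : n < 2 * p)
    (hcycle : ∃ σ ∈ G, σ.IsCycle ∧ σ.support.card = p) :
    G = ⊤ := by
  classical
  set C : Fin n → Finset (Fin n) := fun a => univ.filter (fun b => Equiv.swap a b ∈ G) with hC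
  have hmemC : ∀ a b : Fin n, b ∈ C a ↔ Equiv.swap a b ∈ G := by
    intro a b; simp [hC]
  have hself : ∀ a, a ∈ C a := fun a => (hmemC a a).2 (by
    rw [Equiv.swap_self]; exact G.one_mem)
  have hsymm : ∀ a b : Fin n, Equiv.swap a b ∈ G → Equiv.swap b a ∈ G := fun a b h => by
    rwa [Equiv.swap_comm]
  have htr : ∀ a b c : Fin n, Equiv.swap a b ∈ G → Equiv.swap b c ∈ G →
      Equiv.swap a c ∈ G := fun a b c => SubmonoidClass.swap_mem_trans G
  have hconj : ∀ τ ∈ G, ∀ a b : Fin n, Equiv.swap a b ∈ G →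
      Equiv.swap (τ a) (τ b) ∈ G := by
    intro τ hτ a b h
    rw [Equiv.swap_apply_apply]
    exact G.mul_mem (G.mul_mem hτ h) (G.inv_mem hτ)
  -- all classes have the same cardinality
  have himage : ∀ a b : Fin n, ∀ τ ∈ G, τ a = b → C b = (C a).image τ := by
    intro a b τ hτ hab
    ext c
    simp only [hmemC, Finset.mem_image]
    constructor
    · intro h
      refine ⟨τ⁻¹ c, ?_, τ.apply_symm_apply c⟩
      have := hconj τ⁻¹ (G.inv_mem hτ) b c h
      rwa [← hab, show τ⁻¹ (τ a) = a from τ.symm_apply_apply a] at this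
    · rintro ⟨d, hd, rfl⟩
      have := hconj τ hτ a d hd
      rwa [hab] at this
  have hcard : ∀ a b : Fin n, (C a).card = (C b).card := by
    intro a b
    obtain ⟨τ, hτ, hab⟩ := htrans a b
    rw [himage a b τ hτ hab, Finset.card_image_of_injective _ τ.injective]
  -- classes have cardinality ≥ 2
  have h2 : ∀ a : Fin n, 2 ≤ (C a).card := by
    obtain ⟨τ, hτ, x, y, hxy, rfl⟩ := hswap
    intro a
    rw [hcard a x]
    have : ({x, y} : Finset (Fin n)) ⊆ C x := by
      intro z hz
      rcases Finset.mem_insert.1 hz with rfl | hz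
      · exact hself z
      · rw [Finset.mem_singleton] at hz; subst hz
        exact (hmemC x z).2 hτ
    calc 2 = ({x, y} : Finset (Fin n)).card := (Finset.card_pair hxy).symm
    _ ≤ (C x).card := Finset.card_le_card this
  obtain ⟨σ, hσG, hσc, hσp⟩ := hcycle
  have horder : orderOf σ = p := by rw [hσc.orderOf, hσp]
  -- two distinct elements of the support are equivalent
  have hex : ∃ i ∈ σ.support, ∃ j ∈ σ.support, i ≠ j ∧ Equiv.swap i j ∈ G := by
    by_contra hcon
    push_neg at hcon
    have hdisj : ∀ i ∈ σ.support, ∀ j ∈ σ.support, i ≠ j → Disjoint (C i) (C j) := by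
      intro i hi j hj hij
      rw [Finset.disjoint_left]
      intro z hzi hzj
      exact hcon i hi j hj hij (htr i z j ((hmemC i z).1 hzi) (hsymm j z ((hmemC j z).1 hzj)))
    have hbig : 2 * p ≤ (σ.support.biUnion C).card := by
      rw [Finset.card_biUnion hdisj]
      calc 2 * p = ∑ _i ∈ σ.support, 2 := by rw [Finset.sum_const, hσp, smul_eq_mul, mul_comm]
      _ ≤ ∑ i ∈ σ.support, (C i).card := Finset.sum_le_sum (fun i _ => h2 i)
    have : (σ.support.biUnion C).card ≤ n := by
      simpa using Finset.card_le_card (Finset.subset_univ (σ.support.biUnion C))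
    omega
  obtain ⟨i, hi, j, hj, hij, hswapij⟩ := hex
  obtain ⟨m, hm⟩ := hσc.exists_pow_eq (Equiv.Perm.mem_support.1 hi) (Equiv.Perm.mem_support.1 hj)
  have hpm : ¬ (p ∣ m) := by
    intro hdvd
    have : σ ^ m = 1 := orderOf_dvd_iff_pow_eq_one.1 (horder ▸ hdvd)
    rw [this] at hm
    simp only [Equiv.Perm.one_apply] at hm
    exact hij hm
  have hσG' : ∀ k : ℕ, σ ^ k ∈ G := fun k => G.pow_mem hσG k
  -- multiples of m
  have hmul : ∀ k : ℕ, Equiv.swap i ((σ ^ (k * m)) i) ∈ G := by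
    intro k
    induction k with
    | zero => simpa using (hmemC i i).1 (hself i)
    | succ k ih =>
      have h1 := hconj (σ ^ m) (hσG' m) i ((σ ^ (k * m)) i) ih
      rw [hm] at h1
      have h2 : (σ ^ m) ((σ ^ (k * m)) i) = (σ ^ ((k + 1) * m)) i := by
        rw [← Equiv.Perm.mul_apply, ← pow_add]
        ring_nf
      rw [h2] at h1
      exact htr i j _ hswapij h1
  -- every power of σ applied to i stays equivalent
  haveI : Fact p.Prime := ⟨hp⟩
  have hall : ∀ t : ℕ, Equiv.swap i ((σ ^ t) i) ∈ G := by
    intro t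
    have hm0 : (m : ZMod p) ≠ 0 := by
      rwa [Ne, ZMod.natCast_eq_zero_iff]
    set k : ℕ := ((t : ZMod p) * (m : ZMod p)⁻¹).val with hk
    have hkm : ((k * m : ℕ) : ZMod p) = (t : ZMod p) := by
      push_cast
      rw [hk, ZMod.natCast_val, ZMod.cast_id]
      field_simp
    have : σ ^ (k * m) = σ ^ t := by
      rw [pow_eq_pow_iff_modEq, horder]
      exact (ZMod.natCast_eq_natCast_iff _ _ _).1 hkm
    rw [← this]
    exact hmul k
  -- the class of i contains the support
  have hsub : σ.support ⊆ C i := by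
    intro y hy
    obtain ⟨t, ht⟩ := hσc.exists_pow_eq (Equiv.Perm.mem_support.1 hi)
      (Equiv.Perm.mem_support.1 hy)
    exact (hmemC i y).2 (ht ▸ hall t)
  have hbigclass : ∀ a : Fin n, n < 2 * (C a).card := by
    intro a
    have : p ≤ (C i).card := hσp ▸ Finset.card_le_card hsub
    have := hcard a i
    omega
  -- any two points are equivalent
  have hallswap : ∀ a b : Fin n, Equiv.swap a b ∈ G := by
    intro a b
    have hun : ((C a) ∪ (C b)).card ≤ n := by
      have := Finset.card_le_card (Finset.subset_univ ((C a) ∪ (C b)))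
      simpa using this
    have hint := Finset.card_union_add_card_inter (C a) (C b)
    have : 0 < ((C a) ∩ (C b)).card := by
      have := hbigclass a; have := hbigclass b; have := hcard a b; omega
    obtain ⟨z, hz⟩ := Finset.card_pos.1 this
    rw [Finset.mem_inter] at hz
    exact htr a z b ((hmemC a z).1 hz.1) (hsymm b z ((hmemC b z).1 hz.2))
  rw [eq_top_iff, ← Equiv.Perm.closure_isSwap, Subgroup.closure_le]
  rintro τ ⟨x, y, hxy, rfl⟩
  exact hallswap x y
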